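/- Let F : ℝ² → ℝ² be twice continuously differentiable with Jacobian matrix J(x̂) = DF(x̂) invertible for every x̂ ∈ ℝ², and let v : ℝ² → ℝ² be continuously differentiable. Define the Piola transform 𝒴₂(v)(x̂) = det(J(x̂)) · J(x̂)⁻¹ · v(F(x̂)). Then for every x̂ ∈ ℝ²: (∇·(𝒴₂(v)))(x̂) = det(J(x̂)) · (∇·v)(F(x̂)), where ∇· is the divergence ∇·u = ∂₁u₁ + ∂₂u₂. -/

import Mathlib

open Matrix

/-- Jacobian matrix of a map `F : ℝ² → ℝ²`: `J(x̂)ᵢⱼ = ∂ⱼ Fᵢ (x̂)`. -/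
noncomputable def jac2 (F : (Fin 2 → ℝ) → (Fin 2 → ℝ)) (x : Fin 2 → ℝ) :
    Matrix (Fin 2) (Fin 2) ℝ :=
  Matrix.of fun i j => fderiv ℝ F x (Pi.single j 1) i

/-- Divergence of a vector field on `ℝ²`: `∇·u = ∂₁u₁ + ∂₂u₂`. -/
noncomputable def div2 (u : (Fin 2 → ℝ) → (Fin 2 → ℝ)) (x : Fin 2 → ℝ) : ℝ :=
  ∑ i : Fin 2, fderiv ℝ (fun y => u y i) x (Pi.single i 1)

/-- The Piola transform `𝒴₂(v)(x̂) = det(J(x̂)) · J(x̂)⁻¹ · v(F(x̂))`. -/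
noncomputable def piola2 (F v : (Fin 2 → ℝ) → (Fin 2 → ℝ)) (x : Fin 2 → ℝ) :
    Fin 2 → ℝ :=
  (jac2 F x).det • ((jac2 F x)⁻¹ *ᵥ v (F x))

/-- The Piola transform intertwines the divergence:
`∇·(𝒴₂ v)(x̂) = det(J(x̂)) · (∇·v)(F(x̂))` for `F` of class `C²` with invertible Jacobian
and `v` of class `C¹`. -/
theorem div_piola2 (F v : (Fin 2 → ℝ) → (Fin 2 → ℝ))
    (hF : ContDiff ℝ 2 F) (hJ : ∀ x : Fin 2 → ℝ, IsUnit (jac2 F x))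
    (hv : ContDiff ℝ 1 v) :
    ∀ x : Fin 2 → ℝ, div2 (fun y => piola2 F v y) x = (jac2 F x).det * div2 v (F x) := by
  have hFd : Differentiable ℝ F := hF.differentiable two_ne_zero
  have hF' : ContDiff ℝ 1 (fderiv ℝ F) := hF.fderiv_right (le_refl 2)
  have hF'd : Differentiable ℝ (fderiv ℝ F) := hF'.differentiable one_ne_zero
  have hvd : Differentiable ℝ v := hv.differentiable one_ne_zero
  intro x
  -- notation
  set e : Fin 2 → (Fin 2 → ℝ) := fun j => Pi.single j 1 with he
  set B := fderiv ℝ (fderiv ℝ F) x with hBdef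
  have hsymm : ∀ u w : Fin 2 → ℝ, B u w = B w u := fun u w =>
    second_derivative_symmetric (fun y => (hFd y).hasFDerivAt) (hF'd x).hasFDerivAt u w
  -- derivatives of Jacobian entries
  have hA : ∀ j i : Fin 2, HasFDerivAt (fun y => fderiv ℝ F y (e j) i)
      (((ContinuousLinearMap.proj i : (Fin 2 → ℝ) →L[ℝ] ℝ).comp
        (ContinuousLinearMap.apply ℝ (Fin 2 → ℝ) (e j))).comp B) x := by
    intro j i
    exact (((ContinuousLinearMap.proj i : (Fin 2 → ℝ) →L[ℝ] ℝ).comp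
      (ContinuousLinearMap.apply ℝ (Fin 2 → ℝ) (e j))).hasFDerivAt).comp x (hF'd x).hasFDerivAt
  -- derivatives of pulled-back components
  have hw : ∀ i : Fin 2, HasFDerivAt (fun y => v (F y) i)
      ((ContinuousLinearMap.proj i : (Fin 2 → ℝ) →L[ℝ] ℝ).comp
        ((fderiv ℝ v (F x)).comp (fderiv ℝ F x))) x := by
    intro i
    exact (ContinuousLinearMap.proj i : (Fin 2 → ℝ) →L[ℝ] ℝ).hasFDerivAt.comp x
      (((hvd (F x)).hasFDerivAt).comp x (hFd x).hasFDerivAt)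
  -- pointwise formula for the Piola transform via the adjugate
  have hpio : ∀ y : Fin 2 → ℝ, piola2 F v y = (jac2 F y).adjugate *ᵥ v (F y) := by
    intro y
    have hdet : IsUnit (jac2 F y).det := (Matrix.isUnit_iff_isUnit_det _).mp (hJ y)
    unfold piola2
    rw [Matrix.inv_def, Matrix.smul_mulVec, smul_smul,
      Ring.mul_inverse_cancel _ hdet, one_smul]
  have hp0 : (fun y => piola2 F v y 0) =
      fun y => fderiv ℝ F y (e 1) 1 * v (F y) 0 - fderiv ℝ F y (e 1) 0 * v (F y) 1 := by
    funext y
    rw [hpio y, Matrix.adjugate_fin_two]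
    simp [Matrix.mulVec, dotProduct, Fin.sum_univ_two, jac2, he]
    ring
  have hp1 : (fun y => piola2 F v y 1) =
      fun y => fderiv ℝ F y (e 0) 0 * v (F y) 1 - fderiv ℝ F y (e 0) 1 * v (F y) 0 := by
    funext y
    rw [hpio y, Matrix.adjugate_fin_two]
    simp [Matrix.mulVec, dotProduct, Fin.sum_univ_two, jac2, he]
    ring
  -- decomposition of a linear map evaluation on ℝ²
  have hdec : ∀ (L : (Fin 2 → ℝ) →L[ℝ] (Fin 2 → ℝ)) (u : Fin 2 → ℝ) (i : Fin 2),
      L u i = u 0 * L (e 0) i + u 1 * L (e 1) i := by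
    intro L u i
    have hu : u = u 0 • e 0 + u 1 • e 1 := by
      funext k; fin_cases k <;> simp [he]
    conv_lhs => rw [hu]
    simp [smul_eq_mul]
  -- derivative of v components
  have hvcomp : ∀ i : Fin 2, fderiv ℝ (fun y => v y i) (F x) (e i) = fderiv ℝ v (F x) (e i) i := by
    intro i
    have h : HasFDerivAt (fun y => v y i)
        ((ContinuousLinearMap.proj i : (Fin 2 → ℝ) →L[ℝ] ℝ).comp (fderiv ℝ v (F x))) (F x) :=
      (ContinuousLinearMap.proj i : (Fin 2 → ℝ) →L[ℝ] ℝ).hasFDerivAt.comp (F x)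
        (hvd (F x)).hasFDerivAt
    rw [h.fderiv]
    simp
  -- compute the two derivatives of the Piola components
  have hd0 : fderiv ℝ (fun y => piola2 F v y 0) x (e 0) =
      fderiv ℝ F x (e 1) 1 * fderiv ℝ v (F x) (fderiv ℝ F x (e 0)) 0
      + v (F x) 0 * B (e 0) (e 1) 1
      - (fderiv ℝ F x (e 1) 0 * fderiv ℝ v (F x) (fderiv ℝ F x (e 0)) 1
      + v (F x) 1 * B (e 0) (e 1) 0) := by
    rw [hp0]
    rw [HasFDerivAt.fderiv (f := fun y => fderiv ℝ F y (e 1) 1 * v (F y) 0 - fderiv ℝ F y (e 1) 0 * v (F y) 1)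
      (((hA 1 1).mul (hw 0)).sub ((hA 1 0).mul (hw 1)))]
    simp
  have hd1 : fderiv ℝ (fun y => piola2 F v y 1) x (e 1) =
      fderiv ℝ F x (e 0) 0 * fderiv ℝ v (F x) (fderiv ℝ F x (e 1)) 1
      + v (F x) 1 * B (e 1) (e 0) 0
      - (fderiv ℝ F x (e 0) 1 * fderiv ℝ v (F x) (fderiv ℝ F x (e 1)) 0
      + v (F x) 0 * B (e 1) (e 0) 1) := by
    rw [hp1]
    rw [HasFDerivAt.fderiv (f := fun y => fderiv ℝ F y (e 0) 0 * v (F y) 1 - fderiv ℝ F y (e 0) 1 * v (F y) 0)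
      (((hA 0 0).mul (hw 1)).sub ((hA 0 1).mul (hw 0)))]
    simp
  -- put everything together
  have hdet : (jac2 F x).det =
      fderiv ℝ F x (e 0) 0 * fderiv ℝ F x (e 1) 1 - fderiv ℝ F x (e 1) 0 * fderiv ℝ F x (e 0) 1 := by
    simp [jac2, Matrix.det_fin_two, he]
  have hB01 : ∀ i : Fin 2, B (e 0) (e 1) i = B (e 1) (e 0) i := fun i =>
    congrFun (hsymm (e 0) (e 1)) i
  show (∑ i : Fin 2, fderiv ℝ (fun y => piola2 F v y i) x (e i)) = _
  rw [Fin.sum_univ_two, hd0, hd1]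
  unfold div2
  rw [Fin.sum_univ_two, hvcomp 0, hvcomp 1, hdet,
    hdec (fderiv ℝ v (F x)) (fderiv ℝ F x (e 0)) 0,
    hdec (fderiv ℝ v (F x)) (fderiv ℝ F x (e 0)) 1,
    hdec (fderiv ℝ v (F x)) (fderiv ℝ F x (e 1)) 0,
    hdec (fderiv ℝ v (F x)) (fderiv ℝ F x (e 1)) 1,
    hB01 0, hB01 1]
  ring
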